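/- For every real v > 1/2 and every tie-breaking rule, if (μ, ν) is a mixed Nash equilibrium of the AND–OR game then the highest bids of the two players on each item coincide: for every x ∈ ℝ, μ{p : p.1 ≤ x} = 1 if and only if ν{p : p.1 ≤ x} = 1, and μ{p : p.2 ≤ x} = 1 if and only if ν{p : p.2 ≤ x} = 1. -/

import Mathlib

open MeasureTheory Set
open scoped ENNReal

noncomputable section

/-- A bid profile for one player: a bid on each of the two items. -/
abbrev Bid := ℝ × ℝ

/-- The maximum allowed bid `H = max 1 v`. -/
def Hval (v : ℝ) : ℝ := max 1 v

/-- The set of allowed bids `[0,H] × [0,H]`. -/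
def box (v : ℝ) : Set Bid := Icc (0:ℝ) (Hval v) ×ˢ Icc (0:ℝ) (Hval v)

/-- A tie-breaking rule: measurable functions `t₁ t₂ : ℝ → [0,1]`, where `tᵢ x` is the
probability that AND wins item `i` when both players bid `x` on it. -/
structure TieRule where
  t1 : ℝ → ℝ
  t2 : ℝ → ℝ
  meas1 : Measurable t1
  meas2 : Measurable t2
  t1_nonneg : ∀ x, 0 ≤ t1 x
  t1_le_one : ∀ x, t1 x ≤ 1
  t2_nonneg : ∀ x, 0 ≤ t2 x
  t2_le_one : ∀ x, t2 x ≤ 1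

/-- Probability that AND wins item 1 with bids `a` (AND) and `b` (OR). -/
def q1 (T : TieRule) (a b : Bid) : ℝ :=
  if b.1 < a.1 then 1 else if a.1 = b.1 then T.t1 a.1 else 0

/-- Probability that AND wins item 2 with bids `a` (AND) and `b` (OR). -/
def q2 (T : TieRule) (a b : Bid) : ℝ :=
  if b.2 < a.2 then 1 else if a.2 = b.2 then T.t2 a.2 else 0

/-- Expected utility of the AND player at the pure profile `(a,b)`. -/
def uAnd (T : TieRule) (a b : Bid) : ℝ :=
  q1 T a b * q2 T a b - a.1 * q1 T a b - a.2 * q2 T a b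

/-- Expected utility of the OR player at the pure profile `(a,b)`. -/
def uOr (v : ℝ) (T : TieRule) (a b : Bid) : ℝ :=
  v * (1 - q1 T a b * q2 T a b) - b.1 * (1 - q1 T a b) - b.2 * (1 - q2 T a b)

/-- A mixed strategy: a Borel probability measure on `ℝ × ℝ` supported in the box. -/
def IsMixed (v : ℝ) (μ : Measure Bid) : Prop :=
  IsProbabilityMeasure μ ∧ μ (box v) = 1

/-- Expected utility of AND under mixed strategies. -/
def UAnd (T : TieRule) (μ ν : Measure Bid) : ℝ :=
  ∫ p, uAnd T p.1 p.2 ∂(μ.prod ν)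

/-- Expected utility of OR under mixed strategies. -/
def UOr (v : ℝ) (T : TieRule) (μ ν : Measure Bid) : ℝ :=
  ∫ p, uOr v T p.1 p.2 ∂(μ.prod ν)

/-- `(μ,ν)` is a mixed Nash equilibrium of the AND–OR game. -/
def IsNash (v : ℝ) (T : TieRule) (μ ν : Measure Bid) : Prop :=
  IsMixed v μ ∧ IsMixed v ν ∧
  (∀ a ∈ box v, (∫ b, uAnd T a b ∂ν) ≤ UAnd T μ ν) ∧
  (∀ b ∈ box v, (∫ a, uOr v T a b ∂μ) ≤ UOr v T μ ν)

/-- The uniform probability measure on `[0,1] ⊆ ℝ`. -/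
def P01 : Measure ℝ := volume.restrict (Icc (0:ℝ) 1)

/-- The OR equilibrium strategy `ν*`: bid `(x,0)` or `(0,x)` with probability `1/2` each,
where `x ∈ [0,1/2]` has CDF `x/(1-x)`. -/
def nuStar : Measure Bid :=
  (1/2 : ℝ≥0∞) • Measure.map (fun u => (u/(1+u), (0:ℝ))) P01 +
  (1/2 : ℝ≥0∞) • Measure.map (fun u => ((0:ℝ), u/(1+u))) P01

/-- Inverse-CDF map for the AND equilibrium bid distribution. -/
def gAnd (v u : ℝ) : ℝ := if 0 < u then max 0 (v - (v - 1/2)/u) else 0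

/-- The AND equilibrium strategy `μ*`: bid `(y,y)` where `y ∈ [0,1/2]` has CDF
`(v-1/2)/(v-y)`, with an atom of mass `1 - 1/(2v)` at `0`. -/
def muStar (v : ℝ) : Measure Bid := Measure.map (fun u => (gAnd v u, gAnd v u)) P01

section Aux

variable (v : ℝ) (T : TieRule)

lemma measurableSet_box : MeasurableSet (box v) :=
  measurableSet_Icc.prod measurableSet_Icc

lemma q1_nonneg (a b : Bid) : 0 ≤ q1 T a b := by
  unfold q1; split_ifs <;> first | exact T.t1_nonneg _ | norm_num

lemma q1_le_one (a b : Bid) : q1 T a b ≤ 1 := by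
  unfold q1; split_ifs <;> first | exact T.t1_le_one _ | norm_num

lemma q2_nonneg (a b : Bid) : 0 ≤ q2 T a b := by
  unfold q2; split_ifs <;> first | exact T.t2_nonneg _ | norm_num

lemma q2_le_one (a b : Bid) : q2 T a b ≤ 1 := by
  unfold q2; split_ifs <;> first | exact T.t2_le_one _ | norm_num

lemma measurable_q1 : Measurable fun p : Bid × Bid => q1 T p.1 p.2 := by
  unfold q1
  apply Measurable.ite
  · exact measurableSet_lt (measurable_fst.comp measurable_snd) (measurable_fst.comp measurable_fst)
  · exact measurable_const
  apply Measurable.ite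
  · exact measurableSet_eq_fun (measurable_fst.comp measurable_fst) (measurable_fst.comp measurable_snd)
  · exact T.meas1.comp (measurable_fst.comp measurable_fst)
  · exact measurable_const

lemma measurable_q2 : Measurable fun p : Bid × Bid => q2 T p.1 p.2 := by
  unfold q2
  apply Measurable.ite
  · exact measurableSet_lt (measurable_snd.comp measurable_snd) (measurable_snd.comp measurable_fst)
  · exact measurable_const
  apply Measurable.ite
  · exact measurableSet_eq_fun (measurable_snd.comp measurable_fst) (measurable_snd.comp measurable_snd)
  · exact T.meas2.comp (measurable_snd.comp measurable_fst)
  · exact measurable_const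

lemma measurable_uAnd : Measurable fun p : Bid × Bid => uAnd T p.1 p.2 := by
  unfold uAnd
  exact (((measurable_q1 T).mul (measurable_q2 T)).sub
    ((measurable_fst.comp measurable_fst).mul (measurable_q1 T))).sub
    ((measurable_snd.comp measurable_fst).mul (measurable_q2 T))

lemma measurable_uOr : Measurable fun p : Bid × Bid => uOr v T p.1 p.2 := by
  unfold uOr
  exact ((measurable_const.mul (measurable_const.sub ((measurable_q1 T).mul (measurable_q2 T)))).sub
    ((measurable_fst.comp measurable_snd).mul (measurable_const.sub (measurable_q1 T)))).sub
    ((measurable_snd.comp measurable_snd).mul (measurable_const.sub (measurable_q2 T)))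

end Aux
section Aux2

variable {v : ℝ} (T : TieRule)

lemma abs_uAnd_le {a : Bid} (ha : a ∈ box v) (b : Bid) :
    |uAnd T a b| ≤ 1 + 2 * Hval v := by
  obtain ⟨⟨h1, h2⟩, h3, h4⟩ := ha
  have hH : (0:ℝ) ≤ Hval v := le_trans zero_le_one (le_max_left _ _)
  have e1 := q1_nonneg T a b; have e2 := q1_le_one T a b
  have e3 := q2_nonneg T a b; have e4 := q2_le_one T a b
  rw [abs_le]; unfold uAnd
  constructor <;> nlinarith [mul_nonneg e1 e3]

lemma abs_uOr_le (hv : 0 < v) {b : Bid} (hb : b ∈ box v) (a : Bid) :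
    |uOr v T a b| ≤ v + 2 * Hval v := by
  obtain ⟨⟨h1, h2⟩, h3, h4⟩ := hb
  have e1 := q1_nonneg T a b; have e2 := q1_le_one T a b
  have e3 := q2_nonneg T a b; have e4 := q2_le_one T a b
  rw [abs_le]; unfold uOr
  constructor <;> nlinarith [mul_nonneg e1 e3, mul_le_one₀ e2 e3 e4]

lemma uAnd_diff1 {x y : ℝ} {a b : Bid} (hb : b.1 ≤ x) (hy : x < y) (ha : x < a.1) :
    uAnd T (y, a.2) b = uAnd T a b + (a.1 - y) := by
  have h1 : q1 T (y, a.2) b = 1 := by unfold q1; rw [if_pos]; exact lt_of_le_of_lt hb hy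
  have h2 : q1 T a b = 1 := by unfold q1; rw [if_pos]; exact lt_of_le_of_lt hb ha
  have h3 : q2 T (y, a.2) b = q2 T a b := rfl
  unfold uAnd; rw [h1, h2, h3]; ring

lemma uAnd_diff2 {x y : ℝ} {a b : Bid} (hb : b.2 ≤ x) (hy : x < y) (ha : x < a.2) :
    uAnd T (a.1, y) b = uAnd T a b + (a.2 - y) := by
  have h1 : q2 T (a.1, y) b = 1 := by unfold q2; rw [if_pos]; exact lt_of_le_of_lt hb hy
  have h2 : q2 T a b = 1 := by unfold q2; rw [if_pos]; exact lt_of_le_of_lt hb ha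
  have h3 : q1 T (a.1, y) b = q1 T a b := rfl
  unfold uAnd; rw [h1, h2, h3]; ring

lemma q1_eq_zero {a b : Bid} (h : a.1 < b.1) : q1 T a b = 0 := by
  unfold q1; rw [if_neg (not_lt.mpr h.le), if_neg h.ne]

lemma q2_eq_zero {a b : Bid} (h : a.2 < b.2) : q2 T a b = 0 := by
  unfold q2; rw [if_neg (not_lt.mpr h.le), if_neg h.ne]

lemma uOr_diff1 {x y : ℝ} {a b : Bid} (ha : a.1 ≤ x) (hy : x < y) (hb : x < b.1) :
    uOr v T a (y, b.2) = uOr v T a b + (b.1 - y) := by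
  have h1 : q1 T a (y, b.2) = 0 := q1_eq_zero T (lt_of_le_of_lt ha hy)
  have h2 : q1 T a b = 0 := q1_eq_zero T (lt_of_le_of_lt ha hb)
  have h3 : q2 T a (y, b.2) = q2 T a b := rfl
  unfold uOr; rw [h1, h2, h3]; ring

lemma uOr_diff2 {x y : ℝ} {a b : Bid} (ha : a.2 ≤ x) (hy : x < y) (hb : x < b.2) :
    uOr v T a (b.1, y) = uOr v T a b + (b.2 - y) := by
  have h1 : q2 T a (b.1, y) = 0 := q2_eq_zero T (lt_of_le_of_lt ha hy)
  have h2 : q2 T a b = 0 := q2_eq_zero T (lt_of_le_of_lt ha hb)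
  have h3 : q1 T a (b.1, y) = q1 T a b := rfl
  unfold uOr; rw [h1, h2, h3]; ring

end Aux2
section Aux3

variable {v : ℝ}

lemma ae_mem_box {μ : Measure Bid} (hμ : IsMixed v μ) : ∀ᵐ a ∂μ, a ∈ box v := by
  obtain ⟨hp, hb⟩ := hμ
  have : μ (box v)ᶜ = 0 := by
    rw [measure_compl (measurableSet_box v) (measure_ne_top μ _), hb, hp.measure_univ, tsub_self]
  rw [ae_iff]; exact this

lemma no_dev {μ : Measure Bid} (hμ : IsMixed v μ) (F : Bid → ℝ)
    (hmeas : AEStronglyMeasurable F μ) (C : ℝ) (hbd : ∀ a ∈ box v, |F a| ≤ C)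
    (U : ℝ) (hle : ∀ a ∈ box v, F a ≤ U) (hU : ∫ a, F a ∂μ = U)
    (S : Set Bid) (hS : MeasurableSet S) (hSpos : μ S ≠ 0)
    (ε : ℝ) (hε : 0 < ε) (hdev : ∀ a ∈ S ∩ box v, F a ≤ U - ε) : False := by
  haveI := hμ.1
  have haebox := ae_mem_box hμ
  have hFint : Integrable F μ := by
    refine Integrable.mono' (integrable_const C) hmeas ?_
    filter_upwards [haebox] with a ha
    simpa using hbd a ha
  set G : Bid → ℝ := fun a => U - F a with hG
  have hGint : Integrable G μ := (integrable_const U).sub hFint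
  have hGnn : 0 ≤ᵐ[μ] G := by
    filter_upwards [haebox] with a ha
    simp [hG]; linarith [hle a ha]
  have hGzero : ∫ a, G a ∂μ = 0 := by
    rw [integral_sub (integrable_const U) hFint, hU, integral_const, probReal_univ]
    simp
  set s := S ∩ box v with hs
  have hsm : MeasurableSet s := hS.inter (measurableSet_box v)
  have hspos : μ s ≠ 0 := by
    intro h0
    apply hSpos
    have : μ S ≤ μ s + μ (box v)ᶜ := by
      refine le_trans (measure_mono ?_) (measure_union_le _ _)
      intro a haS
      by_cases hab : a ∈ box v
      · exact Or.inl ⟨haS, hab⟩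
      · exact Or.inr hab
    have hbc : μ (box v)ᶜ = 0 := by
      rw [measure_compl (measurableSet_box v) (measure_ne_top μ _), hμ.2, measure_univ, tsub_self]
    rw [h0, hbc] at this
    simp only [add_zero] at this
    exact le_antisymm this zero_le
  have key : ε * (μ s).toReal ≤ ∫ a in s, G a ∂μ := by
    refine setIntegral_ge_of_const_le_real hsm (measure_ne_top μ s) ?_ hGint.integrableOn
    intro a ha
    have := hdev a ha
    simp [hG]; linarith
  have le2 : ∫ a in s, G a ∂μ ≤ ∫ a, G a ∂μ := setIntegral_le_integral hGint hGnn
  have hpos : 0 < ε * (μ s).toReal := by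
    apply mul_pos hε
    exact ENNReal.toReal_pos hspos (measure_ne_top μ s)
  linarith [hGzero ▸ le_trans key le2]

end Aux3
section Core

variable {v : ℝ}

lemma uAnd_prod_integrable (T : TieRule) {μ ν : Measure Bid}
    (hμ : IsMixed v μ) (hν : IsMixed v ν) :
    Integrable (fun p : Bid × Bid => uAnd T p.1 p.2) (μ.prod ν) := by
  haveI := hμ.1; haveI := hν.1
  refine Integrable.mono' (integrable_const (1 + 2 * Hval v))
    (measurable_uAnd T).aestronglyMeasurable ?_
  have h0 : (μ.prod ν) ((box v)ᶜ ×ˢ (univ : Set Bid)) = 0 := by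
    rw [Measure.prod_prod]
    have : μ (box v)ᶜ = 0 := by
      rw [measure_compl (measurableSet_box v) (measure_ne_top μ _), hμ.2, measure_univ, tsub_self]
    rw [this, zero_mul]
  have hae : ∀ᵐ p ∂(μ.prod ν), p.1 ∈ box v := by
    rw [ae_iff]
    refine measure_mono_null (fun p hp => ?_) h0
    exact ⟨hp, mem_univ _⟩
  filter_upwards [hae] with p hp
  simpa [Real.norm_eq_abs] using abs_uAnd_le T hp p.2

lemma uOr_prod_integrable (hv : 0 < v) (T : TieRule) {μ ν : Measure Bid}
    (hμ : IsMixed v μ) (hν : IsMixed v ν) :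
    Integrable (fun p : Bid × Bid => uOr v T p.1 p.2) (μ.prod ν) := by
  haveI := hμ.1; haveI := hν.1
  refine Integrable.mono' (integrable_const (v + 2 * Hval v))
    (measurable_uOr v T).aestronglyMeasurable ?_
  have h0 : (μ.prod ν) ((univ : Set Bid) ×ˢ (box v)ᶜ) = 0 := by
    rw [Measure.prod_prod]
    have : ν (box v)ᶜ = 0 := by
      rw [measure_compl (measurableSet_box v) (measure_ne_top ν _), hν.2, measure_univ, tsub_self]
    rw [this, mul_zero]
  have hae : ∀ᵐ p ∂(μ.prod ν), p.2 ∈ box v := by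
    rw [ae_iff]
    refine measure_mono_null (fun p hp => ?_) h0
    exact ⟨mem_univ _, hp⟩
  filter_upwards [hae] with p hp
  simpa [Real.norm_eq_abs] using abs_uOr_le T hv hp p.1

lemma core_and1 (T : TieRule) {μ ν : Measure Bid} (h : IsNash v T μ ν)
    {x : ℝ} (hx : 0 ≤ x) (hνx : ∀ᵐ b ∂ν, b.1 ≤ x)
    {ε : ℝ} (hε : 0 < ε) (hμS : μ {p : Bid | x + ε ≤ p.1} ≠ 0) : False := by
  obtain ⟨hμm, hνm, hA, _⟩ := h
  haveI := hμm.1; haveI := hνm.1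
  set F : Bid → ℝ := fun a => ∫ b, uAnd T a b ∂ν with hF
  have hmeas : AEStronglyMeasurable F μ :=
    (StronglyMeasurable.integral_prod_right (f := fun a b => uAnd T a b)
      (measurable_uAnd T).stronglyMeasurable).aestronglyMeasurable
  have hbd : ∀ a ∈ box v, |F a| ≤ 1 + 2 * Hval v := by
    intro a ha
    have := norm_integral_le_of_norm_le_const (μ := ν) (f := fun b => uAnd T a b)
      (C := 1 + 2 * Hval v) (ae_of_all _ fun b => by
        simpa [Real.norm_eq_abs] using abs_uAnd_le T ha b)
    simpa [Real.norm_eq_abs, measure_univ] using this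
  have hU : ∫ a, F a ∂μ = UAnd T μ ν :=
    (integral_prod _ (uAnd_prod_integrable T hμm hνm)).symm
  refine no_dev hμm F hmeas _ hbd (UAnd T μ ν) hA hU
    {p : Bid | x + ε ≤ p.1} (measurableSet_le measurable_const measurable_fst)
    hμS (ε/2) (by linarith) ?_
  rintro a ⟨haS, habox⟩
  have haS' : x + ε ≤ a.1 := haS
  have hint_a : Integrable (fun b => uAnd T a b) ν := by
    refine Integrable.mono' (integrable_const (1 + 2 * Hval v))
      (((measurable_uAnd T).comp measurable_prodMk_left).aestronglyMeasurable) ?_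
    exact ae_of_all _ fun b => by simpa [Real.norm_eq_abs] using abs_uAnd_le T habox b
  have ha'box : ((x + ε/2, a.2) : Bid) ∈ box v :=
    ⟨⟨by linarith, le_trans (by linarith) habox.1.2⟩, habox.2⟩
  have heq : F (x + ε/2, a.2) = F a + (a.1 - (x + ε/2)) := by
    have hcong : ∀ᵐ b ∂ν, uAnd T (x + ε/2, a.2) b = uAnd T a b + (a.1 - (x + ε/2)) := by
      filter_upwards [hνx] with b hb
      exact uAnd_diff1 T hb (by linarith) (by linarith)
    rw [hF]
    simp only
    rw [integral_congr_ae hcong, integral_add hint_a (integrable_const _),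
      integral_const, probReal_univ]
    simp
  have hle2 : F (x + ε/2, a.2) ≤ UAnd T μ ν := hA _ ha'box
  linarith [heq, hle2, haS']

lemma core_or1 (hv : 0 < v) (T : TieRule) {μ ν : Measure Bid} (h : IsNash v T μ ν)
    {x : ℝ} (hx : 0 ≤ x) (hμx : ∀ᵐ a ∂μ, a.1 ≤ x)
    {ε : ℝ} (hε : 0 < ε) (hνS : ν {p : Bid | x + ε ≤ p.1} ≠ 0) : False := by
  obtain ⟨hμm, hνm, _, hO⟩ := h
  haveI := hμm.1; haveI := hνm.1
  set F : Bid → ℝ := fun b => ∫ a, uOr v T a b ∂μ with hF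
  have hmeas : AEStronglyMeasurable F ν :=
    (StronglyMeasurable.integral_prod_left (f := fun a b => uOr v T a b)
      (measurable_uOr v T).stronglyMeasurable).aestronglyMeasurable
  have hbd : ∀ b ∈ box v, |F b| ≤ v + 2 * Hval v := by
    intro b hb
    have := norm_integral_le_of_norm_le_const (μ := μ) (f := fun a => uOr v T a b)
      (C := v + 2 * Hval v) (ae_of_all _ fun a => by
        simpa [Real.norm_eq_abs] using abs_uOr_le T hv hb a)
    simpa [Real.norm_eq_abs, measure_univ] using this
  have hU : ∫ b, F b ∂ν = UOr v T μ ν :=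
    (integral_prod_symm _ (uOr_prod_integrable hv T hμm hνm)).symm
  refine no_dev hνm F hmeas _ hbd (UOr v T μ ν) hO hU
    {p : Bid | x + ε ≤ p.1} (measurableSet_le measurable_const measurable_fst)
    hνS (ε/2) (by linarith) ?_
  rintro b ⟨hbS, hbbox⟩
  have hbS' : x + ε ≤ b.1 := hbS
  have hint_b : Integrable (fun a => uOr v T a b) μ := by
    refine Integrable.mono' (integrable_const (v + 2 * Hval v))
      (((measurable_uOr v T).comp (measurable_id.prodMk measurable_const)).aestronglyMeasurable) ?_
    exact ae_of_all _ fun a => by simpa [Real.norm_eq_abs] using abs_uOr_le T hv hbbox a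
  have hb'box : ((x + ε/2, b.2) : Bid) ∈ box v :=
    ⟨⟨by linarith, le_trans (by linarith) hbbox.1.2⟩, hbbox.2⟩
  have heq : F (x + ε/2, b.2) = F b + (b.1 - (x + ε/2)) := by
    have hcong : ∀ᵐ a ∂μ, uOr v T a (x + ε/2, b.2) = uOr v T a b + (b.1 - (x + ε/2)) := by
      filter_upwards [hμx] with a ha
      exact uOr_diff1 T ha (by linarith) (by linarith)
    rw [hF]
    simp only
    rw [integral_congr_ae hcong, integral_add hint_b (integrable_const _),
      integral_const, probReal_univ]
    simp
  have hle2 : F (x + ε/2, b.2) ≤ UOr v T μ ν := hO _ hb'box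
  linarith [heq, hle2, hbS']

end Core
section Core2

variable {v : ℝ}

lemma core_and2 (T : TieRule) {μ ν : Measure Bid} (h : IsNash v T μ ν)
    {x : ℝ} (hx : 0 ≤ x) (hνx : ∀ᵐ b ∂ν, b.2 ≤ x)
    {ε : ℝ} (hε : 0 < ε) (hμS : μ {p : Bid | x + ε ≤ p.2} ≠ 0) : False := by
  obtain ⟨hμm, hνm, hA, _⟩ := h
  haveI := hμm.1; haveI := hνm.1
  set F : Bid → ℝ := fun a => ∫ b, uAnd T a b ∂ν with hF
  have hmeas : AEStronglyMeasurable F μ :=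
    (StronglyMeasurable.integral_prod_right (f := fun a b => uAnd T a b)
      (measurable_uAnd T).stronglyMeasurable).aestronglyMeasurable
  have hbd : ∀ a ∈ box v, |F a| ≤ 1 + 2 * Hval v := by
    intro a ha
    have := norm_integral_le_of_norm_le_const (μ := ν) (f := fun b => uAnd T a b)
      (C := 1 + 2 * Hval v) (ae_of_all _ fun b => by
        simpa [Real.norm_eq_abs] using abs_uAnd_le T ha b)
    simpa [Real.norm_eq_abs, measure_univ] using this
  have hU : ∫ a, F a ∂μ = UAnd T μ ν :=
    (integral_prod _ (uAnd_prod_integrable T hμm hνm)).symm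
  refine no_dev hμm F hmeas _ hbd (UAnd T μ ν) hA hU
    {p : Bid | x + ε ≤ p.2} (measurableSet_le measurable_const measurable_snd)
    hμS (ε/2) (by linarith) ?_
  rintro a ⟨haS, habox⟩
  have haS' : x + ε ≤ a.2 := haS
  have hint_a : Integrable (fun b => uAnd T a b) ν := by
    refine Integrable.mono' (integrable_const (1 + 2 * Hval v))
      (((measurable_uAnd T).comp measurable_prodMk_left).aestronglyMeasurable) ?_
    exact ae_of_all _ fun b => by simpa [Real.norm_eq_abs] using abs_uAnd_le T habox b
  have ha'box : ((a.1, x + ε/2) : Bid) ∈ box v :=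
    ⟨habox.1, by constructor <;> [linarith; exact le_trans (by linarith) habox.2.2]⟩
  have heq : F (a.1, x + ε/2) = F a + (a.2 - (x + ε/2)) := by
    have hcong : ∀ᵐ b ∂ν, uAnd T (a.1, x + ε/2) b = uAnd T a b + (a.2 - (x + ε/2)) := by
      filter_upwards [hνx] with b hb
      exact uAnd_diff2 T hb (by linarith) (by linarith)
    rw [hF]
    simp only
    rw [integral_congr_ae hcong, integral_add hint_a (integrable_const _),
      integral_const, probReal_univ]
    simp
  have hle2 : F (a.1, x + ε/2) ≤ UAnd T μ ν := hA _ ha'box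
  linarith [heq, hle2, haS']

lemma core_or2 (hv : 0 < v) (T : TieRule) {μ ν : Measure Bid} (h : IsNash v T μ ν)
    {x : ℝ} (hx : 0 ≤ x) (hμx : ∀ᵐ a ∂μ, a.2 ≤ x)
    {ε : ℝ} (hε : 0 < ε) (hνS : ν {p : Bid | x + ε ≤ p.2} ≠ 0) : False := by
  obtain ⟨hμm, hνm, _, hO⟩ := h
  haveI := hμm.1; haveI := hνm.1
  set F : Bid → ℝ := fun b => ∫ a, uOr v T a b ∂μ with hF
  have hmeas : AEStronglyMeasurable F ν :=
    (StronglyMeasurable.integral_prod_left (f := fun a b => uOr v T a b)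
      (measurable_uOr v T).stronglyMeasurable).aestronglyMeasurable
  have hbd : ∀ b ∈ box v, |F b| ≤ v + 2 * Hval v := by
    intro b hb
    have := norm_integral_le_of_norm_le_const (μ := μ) (f := fun a => uOr v T a b)
      (C := v + 2 * Hval v) (ae_of_all _ fun a => by
        simpa [Real.norm_eq_abs] using abs_uOr_le T hv hb a)
    simpa [Real.norm_eq_abs, measure_univ] using this
  have hU : ∫ b, F b ∂ν = UOr v T μ ν :=
    (integral_prod_symm _ (uOr_prod_integrable hv T hμm hνm)).symm
  refine no_dev hνm F hmeas _ hbd (UOr v T μ ν) hO hU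
    {p : Bid | x + ε ≤ p.2} (measurableSet_le measurable_const measurable_snd)
    hνS (ε/2) (by linarith) ?_
  rintro b ⟨hbS, hbbox⟩
  have hbS' : x + ε ≤ b.2 := hbS
  have hint_b : Integrable (fun a => uOr v T a b) μ := by
    refine Integrable.mono' (integrable_const (v + 2 * Hval v))
      (((measurable_uOr v T).comp (measurable_id.prodMk measurable_const)).aestronglyMeasurable) ?_
    exact ae_of_all _ fun a => by simpa [Real.norm_eq_abs] using abs_uOr_le T hv hbbox a
  have hb'box : ((b.1, x + ε/2) : Bid) ∈ box v :=
    ⟨hbbox.1, by constructor <;> [linarith; exact le_trans (by linarith) hbbox.2.2]⟩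
  have heq : F (b.1, x + ε/2) = F b + (b.2 - (x + ε/2)) := by
    have hcong : ∀ᵐ a ∂μ, uOr v T a (b.1, x + ε/2) = uOr v T a b + (b.2 - (x + ε/2)) := by
      filter_upwards [hμx] with a ha
      exact uOr_diff2 T ha (by linarith) (by linarith)
    rw [hF]
    simp only
    rw [integral_congr_ae hcong, integral_add hint_b (integrable_const _),
      integral_const, probReal_univ]
    simp
  have hle2 : F (b.1, x + ε/2) ≤ UOr v T μ ν := hO _ hb'box
  linarith [heq, hle2, hbS']

end Core2
section Glue

variable {v : ℝ}

lemma one_to_ae {μ : Measure Bid} [IsProbabilityMeasure μ] {f : Bid → ℝ} (hf : Measurable f)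
    {x : ℝ} (h : μ {p | f p ≤ x} = 1) : ∀ᵐ p ∂μ, f p ≤ x := by
  have hms : MeasurableSet {p : Bid | f p ≤ x} := measurableSet_le hf measurable_const
  have hc := measure_compl hms (measure_ne_top μ _)
  rw [h, measure_univ, tsub_self] at hc
  rw [ae_iff]
  exact hc

lemma exists_eps {μ : Measure Bid} [IsProbabilityMeasure μ] {f : Bid → ℝ} (hf : Measurable f)
    {x : ℝ} (h : μ {p | f p ≤ x} ≠ 1) : ∃ ε : ℝ, 0 < ε ∧ μ {p | x + ε ≤ f p} ≠ 0 := by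
  have hms : MeasurableSet {p : Bid | f p ≤ x} := measurableSet_le hf measurable_const
  have hc : μ {p | f p ≤ x}ᶜ ≠ 0 := by
    rw [measure_compl hms (measure_ne_top μ _), measure_univ]
    intro h0
    exact h (le_antisymm prob_le_one (tsub_eq_zero_iff_le.mp h0))
  by_contra hno
  push_neg at hno
  apply hc
  have hsub : {p : Bid | f p ≤ x}ᶜ ⊆ ⋃ n : ℕ, {p : Bid | x + 1/(n+1) ≤ f p} := by
    intro p hp
    simp only [mem_compl_iff, mem_setOf_eq, not_le] at hp
    obtain ⟨n, hn⟩ := exists_nat_one_div_lt (sub_pos.mpr hp)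
    exact mem_iUnion.mpr ⟨n, by simp only [mem_setOf_eq]; linarith⟩
  refine measure_mono_null hsub ?_
  rw [measure_iUnion_null_iff]
  intro n
  exact hno (1/(n+1)) (by positivity)

lemma neg_zero1 {μ : Measure Bid} (hμ : IsMixed v μ) {x : ℝ} (hx : x < 0) :
    μ {p : Bid | p.1 ≤ x} = 0 := by
  haveI := hμ.1
  have hbc : μ (box v)ᶜ = 0 := by
    rw [measure_compl (measurableSet_box v) (measure_ne_top μ _), hμ.2, measure_univ, tsub_self]
  refine measure_mono_null ?_ hbc
  intro p hp
  simp only [mem_compl_iff]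
  intro hpb
  exact absurd (le_trans hpb.1.1 hp) (not_le.mpr hx)

lemma neg_zero2 {μ : Measure Bid} (hμ : IsMixed v μ) {x : ℝ} (hx : x < 0) :
    μ {p : Bid | p.2 ≤ x} = 0 := by
  haveI := hμ.1
  have hbc : μ (box v)ᶜ = 0 := by
    rw [measure_compl (measurableSet_box v) (measure_ne_top μ _), hμ.2, measure_univ, tsub_self]
  refine measure_mono_null ?_ hbc
  intro p hp
  simp only [mem_compl_iff]
  intro hpb
  exact absurd (le_trans hpb.2.1 hp) (not_le.mpr hx)

end Glue

/-- In any mixed Nash equilibrium `(μ,ν)` with `v > 1/2`, the highest bids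
of the two players on each item coincide: `μ{p : p.i ≤ x} = 1 ↔ ν{p : p.i ≤ x} = 1`. -/
theorem highest_bids_equal (v : ℝ) (hv : 1/2 < v) (T : TieRule)
    (μ ν : Measure Bid) (h : IsNash v T μ ν) :
    ∀ x : ℝ,
      (μ {p : Bid | p.1 ≤ x} = 1 ↔ ν {p : Bid | p.1 ≤ x} = 1) ∧
      (μ {p : Bid | p.2 ≤ x} = 1 ↔ ν {p : Bid | p.2 ≤ x} = 1) := by
  intro x
  have hμm := h.1
  have hνm := h.2.1
  haveI := hμm.1; haveI := hνm.1
  have hv0 : (0:ℝ) < v := by linarith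
  constructor
  · constructor
    · intro h1
      by_contra h2
      rcases lt_or_ge x 0 with hx | hx
      · rw [neg_zero1 hμm hx] at h1; exact zero_ne_one h1
      · obtain ⟨ε, hε, hS⟩ := exists_eps measurable_fst h2
        exact core_or1 hv0 T h hx (one_to_ae measurable_fst h1) hε hS
    · intro h1
      by_contra h2
      rcases lt_or_ge x 0 with hx | hx
      · rw [neg_zero1 hνm hx] at h1; exact zero_ne_one h1
      · obtain ⟨ε, hε, hS⟩ := exists_eps measurable_fst h2
        exact core_and1 T h hx (one_to_ae measurable_fst h1) hε hS
  · constructor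
    · intro h1
      by_contra h2
      rcases lt_or_ge x 0 with hx | hx
      · rw [neg_zero2 hμm hx] at h1; exact zero_ne_one h1
      · obtain ⟨ε, hε, hS⟩ := exists_eps measurable_snd h2
        exact core_or2 hv0 T h hx (one_to_ae measurable_snd h1) hε hS
    · intro h1
      by_contra h2
      rcases lt_or_ge x 0 with hx | hx
      · rw [neg_zero2 hνm hx] at h1; exact zero_ne_one h1
      · obtain ⟨ε, hε, hS⟩ := exists_eps measurable_snd h2
        exact core_and2 T h hx (one_to_ae measurable_snd h1) hε hS
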